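/- In a two-player game on a finite graph with players Eve and Adam, where Eve's objective is a parity condition Parity(κ) and Adam wins every play (constant payoff 1), the following are equivalent: (1) Eve has a strategy σ_E such that every play compatible with σ_E from v₀ is in Parity(κ); (2) there exists a strong secure equilibrium σ̄ = (σ_E, σ_A) from v₀ in which both Eve and Adam get payoff 1. -/

import Mathlib

namespace Stmt12

noncomputable section
open Classical

/-- A two-player arena: vertices are owned by Eve (`true`) or Adam (`false`). -/
structure Arena (ι V : Type*) where
  owner : V → ι
  E : V → V → Prop
  nosink : ∀ v, ∃ w, E v w

def Strat {ι V : Type*} (G : Arena ι V) :=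
  {f : List V → V → V // ∀ h v, G.E v (f h v)}

def histFun {ι V : Type*} (G : Arena ι V) (σ : ι → Strat G) (v0 : V) :
    ℕ → List V × V
  | 0 => ([], v0)
  | n + 1 =>
    let p := histFun G σ v0 n
    (p.1 ++ [p.2], (σ (G.owner p.2)).1 p.1 p.2)

def play {ι V : Type*} (G : Arena ι V) (σ : ι → Strat G) (v0 : V) : ℕ → V :=
  fun n => (histFun G σ v0 n).2

def combine {ι V : Type*} {G : Arena ι V} (C : Set ι) (σ σ' : ι → Strat G) :
    ι → Strat G :=
  fun i => if i ∈ C then σ' i else σ i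

def HarmfulDev {ι V : Type*} (G : Arena ι V) (μ : ι → (ℕ → V) → ℝ)
    (v0 : V) (σ : ι → Strat G) (C : Set ι) (σ' : ι → Strat G) : Prop :=
  (∀ i ∈ C, μ i (play G σ v0) ≤ μ i (play G (combine C σ σ') v0)) ∧
  (∃ j, j ∉ C ∧ μ j (play G (combine C σ σ') v0) < μ j (play G σ v0))

def IsSSE {ι V : Type*} (G : Arena ι V) (μ : ι → (ℕ → V) → ℝ)
    (v0 : V) (σ : ι → Strat G) : Prop :=
  ¬ ∃ (C : Set ι) (σ' : ι → Strat G), HarmfulDev G μ v0 σ C σ'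

def InfOcc {X : Type*} (π : ℕ → X) (v : X) : Prop :=
  ∀ N, ∃ n ≥ N, π n = v

def ParityAccept {X : Type*} (κ : X → ℕ) (π : ℕ → X) : Prop :=
  ∃ v, InfOcc π v ∧ Even (κ v) ∧ ∀ w, InfOcc π w → κ v ≤ κ w

lemma hist_eq {ι V : Type*} (G : Arena ι V) (σ : ι → Strat G) (v0 : V) :
    ∀ n, (histFun G σ v0 n).1 = (List.range n).map (play G σ v0) := by
  intro n
  induction n with
  | zero => simp [histFun]
  | succ m ih =>
    show (histFun G σ v0 m).1 ++ [(histFun G σ v0 m).2]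
        = (List.range (m+1)).map (play G σ v0)
    rw [List.range_succ, List.map_append, ih]; rfl

lemma play_succ {ι V : Type*} (G : Arena ι V) (σ : ι → Strat G) (v0 : V) (n : ℕ) :
    play G σ v0 (n+1)
      = (σ (G.owner (play G σ v0 n))).1 (histFun G σ v0 n).1 (play G σ v0 n) := rfl

/-- In the two-player game where Eve (`true`) has a parity objective and Adam
(`false`) wins every play, Eve has a winning strategy from `v0` iff there is an SSE
from `v0` in which both players get payoff 1. -/
theorem stmt12 (V : Type*) [Fintype V] (G : Arena Bool V) (v0 : V)
    (κ : V → ℕ)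
    (μ : Bool → (ℕ → V) → ℝ)
    (hEve : ∀ π, μ true π = if ParityAccept κ π then 1 else 0)
    (hAdam : ∀ π, μ false π = 1) :
    (∃ σE : Strat G, ∀ π : ℕ → V,
        π 0 = v0 → (∀ n, G.E (π n) (π (n + 1))) →
        (∀ n, G.owner (π n) = true → π (n + 1) = σE.1 ((List.range n).map π) (π n)) →
        ParityAccept κ π) ↔
    (∃ σ : Bool → Strat G, IsSSE G μ v0 σ ∧
        μ true (play G σ v0) = 1 ∧ μ false (play G σ v0) = 1) := by
  constructor
  · rintro ⟨σE, hσE⟩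
    set σ : Bool → Strat G := fun _ => σE with hσ
    have key : ∀ (τ : Bool → Strat G), τ true = σE →
        ParityAccept κ (play G τ v0) := by
      intro τ hτ
      apply hσE (play G τ v0) rfl
      · intro n
        rw [play_succ]
        exact ((τ _).2 _ _)
      · intro n hn
        rw [play_succ, hn, hτ, hist_eq]
    refine ⟨σ, ?_, ?_, hAdam _⟩
    · rintro ⟨C, σ', h1, j, hj, hlt⟩
      cases j with
      | false => rw [hAdam, hAdam] at hlt; exact absurd hlt (lt_irrefl 1)
      | true =>
        have hc : combine C σ σ' true = σE := by
          simp [combine, hj, hσ]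
        rw [hEve, hEve, if_pos (key σ rfl), if_pos (key _ hc)] at hlt
        exact absurd hlt (lt_irrefl 1)
    · rw [hEve, if_pos (key σ rfl)]
  · rintro ⟨σ, hSSE, hE1, _⟩
    refine ⟨σ true, ?_⟩
    intro π hπ0 hπE hπσ
    by_contra hnot
    set σ' : Bool → Strat G := fun _ =>
      ⟨fun h v => if hE : G.E v (π (h.length + 1)) then π (h.length + 1)
        else Classical.choose (G.nosink v),
       by
        intro h v
        dsimp only
        split
        · assumption
        · exact Classical.choose_spec (G.nosink v)⟩ with hσ'
    set τ : Bool → Strat G := combine {false} σ σ' with hτ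
    have keyn : ∀ n, play G τ v0 n = π n := by
      intro n
      induction n using Nat.strong_induction_on with
      | _ n ih =>
        match n with
        | 0 => exact hπ0.symm
        | (m+1) =>
          have hm : play G τ v0 m = π m := ih m (Nat.lt_succ_self m)
          have hist : (histFun G τ v0 m).1 = (List.range m).map π := by
            rw [hist_eq]
            apply List.map_congr_left
            intro k hk
            exact ih k (lt_trans (List.mem_range.mp hk) (Nat.lt_succ_self m))
          rw [play_succ, hm, hist]
          cases howner : G.owner (π m) with
          | true =>
            have : τ true = σ true := by simp [hτ, combine]
            rw [this, ← hπσ m howner]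
          | false =>
            have : τ false = σ' false := by simp [hτ, combine]
            rw [this, hσ']
            have hlen : ((List.range m).map π).length = m := by simp
            dsimp only
            rw [hlen, dif_pos (hπE m)]
    have hplay : play G τ v0 = π := funext keyn
    apply hSSE
    refine ⟨{false}, σ', ?_, true, by simp, ?_⟩
    · intro i hi
      have : i = false := hi
      subst this
      rw [hAdam, hAdam]
    · rw [← hτ, hplay, hEve, if_neg hnot, hE1]
      norm_num


end
end Stmt12
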